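/- Let L' be a bipartite graph between vertex sets A and B with e(L') even and 2·(2Δ(L')) ≤ e(L'). Then the edge set of L' can be partitioned into matchings each of size exactly 2. -/
import Mathlib

open Finset

lemma pair_decomp {α : Type*} [DecidableEq α] (R : α → α → Prop) [DecidableRel R]
    (hsym : ∀ x y, R x y → R y x) (hirr : ∀ x, ¬ R x x)
    (S : Finset α) (heven : Even S.card)
    (hdeg : ∀ x ∈ S, S.card < 2 * (S.filter (fun y => R x y)).card) :
    ∃ P : Finset (Finset α),
      (∀ p ∈ P, ∃ x, ∃ y, x ∈ S ∧ y ∈ S ∧ R x y ∧ p = {x, y}) ∧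
      (∀ p ∈ P, ∀ q ∈ P, p ≠ q → Disjoint p q) ∧
      (∀ x ∈ S, ∃ p ∈ P, x ∈ p) := by
  classical
  set valid : Finset (Finset α) → Prop := fun P =>
    (∀ p ∈ P, ∃ x, ∃ y, x ∈ S ∧ y ∈ S ∧ R x y ∧ p = {x, y}) ∧
    (∀ p ∈ P, ∀ q ∈ P, p ≠ q → Disjoint p q) with hvalid
  have hne : (S.powerset.powerset.filter valid).Nonempty := by
    refine ⟨∅, ?_⟩
    simp [hvalid]
  obtain ⟨P, hPmem, hPmax⟩ := Finset.exists_max_image _ Finset.card hne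
  rw [Finset.mem_filter, Finset.mem_powerset] at hPmem
  obtain ⟨hPsub, hP1, hP2⟩ := hPmem
  have hpairsub : ∀ p ∈ P, p ⊆ S := by
    intro p hp
    obtain ⟨x, y, hx, hy, hR, rfl⟩ := hP1 p hp
    intro z hz
    rcases Finset.mem_insert.1 hz with hz | hz
    · exact hz ▸ hx
    · rw [Finset.mem_singleton] at hz; exact hz ▸ hy
  have hcard2 : ∀ p ∈ P, p.card = 2 := by
    intro p hp
    obtain ⟨x, y, hx, hy, hR, rfl⟩ := hP1 p hp
    exact Finset.card_pair (fun h => hirr x (h ▸ hR))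
  refine ⟨P, hP1, hP2, ?_⟩
  by_contra hcov
  push_neg at hcov
  obtain ⟨x0, hx0S, hx0⟩ := hcov
  set C : Finset α := P.biUnion id with hC
  have hCS : C ⊆ S := Finset.biUnion_subset.2 hpairsub
  have hCcard : C.card = 2 * P.card := by
    calc C.card = ∑ p ∈ P, (id p).card := Finset.card_biUnion hP2
      _ = ∑ p ∈ P, 2 := Finset.sum_congr rfl hcard2
      _ = 2 * P.card := by simp [Nat.mul_comm]
  set U : Finset α := S \ C with hU
  have hx0U : x0 ∈ U := by
    rw [hU, Finset.mem_sdiff]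
    refine ⟨hx0S, ?_⟩
    simp only [hC, Finset.mem_biUnion, id]
    rintro ⟨p, hp, hxp⟩
    exact hx0 p hp hxp
  have hUcard : U.card = S.card - C.card := Finset.card_sdiff_of_subset hCS
  have hUeven : Even U.card := by
    rw [hUcard, Nat.even_sub (Finset.card_le_card hCS)]
    constructor <;> intro _
    · rw [hCcard]; exact even_two_mul _
    · exact heven
  have hU2 : 1 < U.card := by
    obtain ⟨k, hk⟩ := hUeven
    have : 0 < U.card := Finset.card_pos.2 ⟨x0, hx0U⟩
    omega
  obtain ⟨v, hvU, hvne⟩ := Finset.exists_mem_ne hU2 x0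
  have hmaxP : ∀ Q, Q ⊆ S.powerset → valid Q → Q.card ≤ P.card := by
    intro Q hQ1 hQ2
    exact hPmax Q (Finset.mem_filter.2 ⟨Finset.mem_powerset.2 hQ1, hQ2⟩)
  have hvS : v ∈ S := (Finset.mem_sdiff.1 hvU).1
  have huncov : ∀ u ∈ U, ∀ p ∈ P, u ∉ p := by
    intro u hu p hp hup
    exact (Finset.mem_sdiff.1 hu).2 (Finset.mem_biUnion.2 ⟨p, hp, hup⟩)
  by_cases hUR : ∃ u ∈ U, ∃ w ∈ U, u ≠ w ∧ R u w
  · -- augment with a new pair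
    obtain ⟨u, hu, w, hw, huw, hRuw⟩ := hUR
    have huS : u ∈ S := (Finset.mem_sdiff.1 hu).1
    have hwS : w ∈ S := (Finset.mem_sdiff.1 hw).1
    have hnotmem : ({u, w} : Finset α) ∉ P := by
      intro hmem
      exact huncov u hu _ hmem (Finset.mem_insert_self u {w})
    have hdisj : ∀ q ∈ P, Disjoint ({u, w} : Finset α) q := by
      intro q hq
      rw [Finset.disjoint_left]
      intro a ha haq
      rcases Finset.mem_insert.1 ha with ha | ha
      · exact huncov u hu q hq (ha ▸ haq)
      · rw [Finset.mem_singleton] at ha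
        exact huncov w hw q hq (ha ▸ haq)
    have hvalidQ : valid (insert {u, w} P) := by
      constructor
      · intro p hp
        rcases Finset.mem_insert.1 hp with hp | hp
        · exact ⟨u, w, huS, hwS, hRuw, hp⟩
        · exact hP1 p hp
      · intro p hp q hq hpq
        rcases Finset.mem_insert.1 hp with hp | hp <;>
          rcases Finset.mem_insert.1 hq with hq | hq
        · exact absurd (hp.trans hq.symm) hpq
        · exact hp ▸ hdisj q hq
        · exact (hq ▸ hdisj p hp).symm
        · exact hP2 p hp q hq hpq
    have hsub : insert ({u, w} : Finset α) P ⊆ S.powerset := by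
      intro p hp
      rcases Finset.mem_insert.1 hp with hp | hp
      · exact hp ▸ Finset.mem_powerset.2 (Finset.insert_subset huS (by simpa using hwS))
      · exact hPsub hp
    have := hmaxP _ hsub hvalidQ
    rw [Finset.card_insert_of_notMem hnotmem] at this
    omega
  · push_neg at hUR
    set N : α → Finset α := fun x => S.filter (fun y => R x y) with hN
    have hNC : ∀ u ∈ U, N u ⊆ C := by
      intro u hu y hy
      rw [hN, Finset.mem_filter] at hy
      by_contra hyC
      have hyU : y ∈ U := Finset.mem_sdiff.2 ⟨hy.1, hyC⟩
      have : u ≠ y := fun h => hirr u (h ▸ hy.2)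
      exact hUR u hu y hyU this hy.2
    have hNsplit : ∀ u ∈ U, (N u).card = ∑ p ∈ P, ((N u) ∩ p).card := by
      intro u hu
      have heq : N u = P.biUnion (fun p => (N u) ∩ p) := by
        apply Finset.Subset.antisymm
        · intro y hy
          obtain ⟨p, hp, hyp⟩ := Finset.mem_biUnion.1 (hNC u hu hy)
          exact Finset.mem_biUnion.2 ⟨p, hp, Finset.mem_inter.2 ⟨hy, hyp⟩⟩
        · intro y hy
          obtain ⟨p, hp, hyp⟩ := Finset.mem_biUnion.1 hy
          exact (Finset.mem_inter.1 hyp).1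
      conv_lhs => rw [heq]
      apply Finset.card_biUnion
      intro p hp q hq hpq
      exact Finset.disjoint_of_subset_left Finset.inter_subset_right
        (Finset.disjoint_of_subset_right Finset.inter_subset_right (hP2 p hp q hq hpq))
    have hbig : ∑ p ∈ P, (2 : ℕ) < ∑ p ∈ P, (((N x0) ∩ p).card + ((N v) ∩ p).card) := by
      rw [Finset.sum_add_distrib, ← hNsplit x0 hx0U, ← hNsplit v hvU]
      have h1 := hdeg x0 hx0S
      have h2 := hdeg v hvS
      have h3 : C.card ≤ S.card := Finset.card_le_card hCS
      simp only [Finset.sum_const, smul_eq_mul, hN]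
      omega
    obtain ⟨p, hp, hplt⟩ := Finset.exists_lt_of_sum_lt hbig
    obtain ⟨x, y, hxS, hyS, hRxy, rfl⟩ := hP1 p hp
    have hxy : x ≠ y := fun h => hirr x (h ▸ hRxy)
    have hAsub : (N x0) ∩ {x, y} ⊆ {x, y} := Finset.inter_subset_right
    have hBsub : (N v) ∩ {x, y} ⊆ {x, y} := Finset.inter_subset_right
    have hpcard : ({x, y} : Finset α).card = 2 := Finset.card_pair hxy
    have hAle : ((N x0) ∩ {x, y}).card ≤ 2 := hpcard ▸ Finset.card_le_card hAsub
    have hBle : ((N v) ∩ {x, y}).card ≤ 2 := hpcard ▸ Finset.card_le_card hBsub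
    have hkey : ∃ w1 ∈ ({x, y} : Finset α), ∃ w2 ∈ ({x, y} : Finset α),
        w1 ≠ w2 ∧ R x0 w1 ∧ R v w2 := by
      by_cases hA2 : ((N x0) ∩ {x, y}).card = 2
      · have hAeq : (N x0) ∩ {x, y} = {x, y} :=
          Finset.eq_of_subset_of_card_le hAsub (by omega)
        have hBpos : 0 < ((N v) ∩ {x, y}).card := by omega
        obtain ⟨w2, hw2⟩ := Finset.card_pos.1 hBpos
        have hw2p : w2 ∈ ({x, y} : Finset α) := (Finset.mem_inter.1 hw2).2
        have hw2R : R v w2 := (Finset.mem_filter.1 (Finset.mem_inter.1 hw2).1).2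
        refine ⟨if w2 = x then y else x, ?_, w2, hw2p, ?_, ?_, hw2R⟩
        · split_ifs <;> simp
        · split_ifs with h
          · rw [h]; exact Ne.symm hxy
          · exact fun hh => h hh.symm
        · have hmem : (if w2 = x then y else x) ∈ (N x0) ∩ ({x, y} : Finset α) := by
            rw [hAeq]; split_ifs <;> simp
          exact (Finset.mem_filter.1 (Finset.mem_inter.1 hmem).1).2
      · have hB2 : ((N v) ∩ {x, y}).card = 2 := by omega
        have hBeq : (N v) ∩ {x, y} = {x, y} :=
          Finset.eq_of_subset_of_card_le hBsub (by omega)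
        have hApos : 0 < ((N x0) ∩ {x, y}).card := by omega
        obtain ⟨w1, hw1⟩ := Finset.card_pos.1 hApos
        have hw1p : w1 ∈ ({x, y} : Finset α) := (Finset.mem_inter.1 hw1).2
        have hw1R : R x0 w1 := (Finset.mem_filter.1 (Finset.mem_inter.1 hw1).1).2
        refine ⟨w1, hw1p, if w1 = x then y else x, ?_, ?_, hw1R, ?_⟩
        · split_ifs <;> simp
        · split_ifs with h
          · rw [h]; exact hxy
          · exact fun hh => h hh
        · have hmem : (if w1 = x then y else x) ∈ (N v) ∩ ({x, y} : Finset α) := by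
            rw [hBeq]; split_ifs <;> simp
          exact (Finset.mem_filter.1 (Finset.mem_inter.1 hmem).1).2
    obtain ⟨w1, hw1p, w2, hw2p, hw12, hRw1, hRw2⟩ := hkey
    have hw1S : w1 ∈ S := hpairsub _ hp hw1p
    have hw2S : w2 ∈ S := hpairsub _ hp hw2p
    have hx0p : x0 ∉ ({x, y} : Finset α) := huncov x0 hx0U _ hp
    have hvp : v ∉ ({x, y} : Finset α) := huncov v hvU _ hp
    have hx0w1 : x0 ≠ w1 := fun h => hx0p (h ▸ hw1p)
    have hx0w2 : x0 ≠ w2 := fun h => hx0p (h ▸ hw2p)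
    have hvw1 : v ≠ w1 := fun h => hvp (h ▸ hw1p)
    have hvw2 : v ≠ w2 := fun h => hvp (h ▸ hw2p)
    set Q : Finset (Finset α) :=
      insert {x0, w1} (insert {v, w2} (P.erase {x, y})) with hQ
    have hx0mem : ∀ q, x0 ∈ q → q ∉ P := fun q hxq hqP => huncov x0 hx0U q hqP hxq
    have hvmem : ∀ q, v ∈ q → q ∉ P := fun q hvq hqP => huncov v hvU q hqP hvq
    have hmemQ1 : ({v, w2} : Finset α) ∉ P.erase {x, y} := by
      intro h
      exact hvmem _ (Finset.mem_insert_self v {w2}) (Finset.mem_of_mem_erase h)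
    have hmemQ2 : ({x0, w1} : Finset α) ∉ insert {v, w2} (P.erase {x, y}) := by
      intro h
      rcases Finset.mem_insert.1 h with heq | h
      · have hmm : x0 ∈ ({v, w2} : Finset α) := heq ▸ Finset.mem_insert_self x0 {w1}
        rcases Finset.mem_insert.1 hmm with h' | h'
        · exact hvne h'.symm
        · rw [Finset.mem_singleton] at h'; exact hx0w2 h'
      · exact hx0mem _ (Finset.mem_insert_self x0 {w1}) (Finset.mem_of_mem_erase h)
    have hQcard : Q.card = P.card + 1 := by
      rw [hQ, Finset.card_insert_of_notMem hmemQ2, Finset.card_insert_of_notMem hmemQ1,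
        Finset.card_erase_of_mem hp]
      have : 0 < P.card := Finset.card_pos.2 ⟨_, hp⟩
      omega
    have hd1 : Disjoint ({x0, w1} : Finset α) {v, w2} := by
      rw [Finset.disjoint_left]
      intro a ha hb
      rcases Finset.mem_insert.1 ha with ha | ha
      · subst ha
        rcases Finset.mem_insert.1 hb with hb | hb
        · exact hvne hb.symm
        · rw [Finset.mem_singleton] at hb; exact hx0w2 hb
      · rw [Finset.mem_singleton] at ha; subst ha
        rcases Finset.mem_insert.1 hb with hb | hb
        · exact hvw1 hb.symm
        · rw [Finset.mem_singleton] at hb; exact hw12 hb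
    have hd2 : ∀ q ∈ P.erase {x, y}, Disjoint ({x0, w1} : Finset α) q := by
      intro q hq
      have hqP := Finset.mem_of_mem_erase hq
      have hqne := Finset.ne_of_mem_erase hq
      rw [Finset.disjoint_left]
      intro a ha hb
      rcases Finset.mem_insert.1 ha with ha | ha
      · exact huncov x0 hx0U q hqP (ha ▸ hb)
      · rw [Finset.mem_singleton] at ha
        exact Finset.disjoint_left.1 (hP2 _ hp q hqP (Ne.symm hqne)) hw1p (ha ▸ hb)
    have hd3 : ∀ q ∈ P.erase {x, y}, Disjoint ({v, w2} : Finset α) q := by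
      intro q hq
      have hqP := Finset.mem_of_mem_erase hq
      have hqne := Finset.ne_of_mem_erase hq
      rw [Finset.disjoint_left]
      intro a ha hb
      rcases Finset.mem_insert.1 ha with ha | ha
      · exact huncov v hvU q hqP (ha ▸ hb)
      · rw [Finset.mem_singleton] at ha
        exact Finset.disjoint_left.1 (hP2 _ hp q hqP (Ne.symm hqne)) hw2p (ha ▸ hb)
    have hvalidQ : valid Q := by
      constructor
      · intro q hq
        rcases Finset.mem_insert.1 hq with hq | hq
        · exact ⟨x0, w1, hx0S, hw1S, hRw1, hq⟩
        rcases Finset.mem_insert.1 hq with hq | hq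
        · exact ⟨v, w2, hvS, hw2S, hRw2, hq⟩
        · exact hP1 q (Finset.mem_of_mem_erase hq)
      · intro q hq r hr hqr
        rcases Finset.mem_insert.1 hq with hq | hq
        · rcases Finset.mem_insert.1 hr with hr | hr
          · exact absurd (hq.trans hr.symm) hqr
          rcases Finset.mem_insert.1 hr with hr | hr
          · exact hq ▸ hr ▸ hd1
          · exact hq ▸ hd2 r hr
        rcases Finset.mem_insert.1 hq with hq | hq
        · rcases Finset.mem_insert.1 hr with hr | hr
          · exact hq ▸ hr ▸ hd1.symm
          rcases Finset.mem_insert.1 hr with hr | hr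
          · exact absurd (hq.trans hr.symm) hqr
          · exact hq ▸ hd3 r hr
        · rcases Finset.mem_insert.1 hr with hr | hr
          · exact (hr ▸ hd2 q hq).symm
          rcases Finset.mem_insert.1 hr with hr | hr
          · exact (hr ▸ hd3 q hq).symm
          · exact hP2 q (Finset.mem_of_mem_erase hq) r (Finset.mem_of_mem_erase hr) hqr
    have hsubQ : Q ⊆ S.powerset := by
      intro q hq
      rcases Finset.mem_insert.1 hq with hq | hq
      · exact hq ▸ Finset.mem_powerset.2 (Finset.insert_subset hx0S (by simpa using hw1S))
      rcases Finset.mem_insert.1 hq with hq | hq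
      · exact hq ▸ Finset.mem_powerset.2 (Finset.insert_subset hvS (by simpa using hw2S))
      · exact hPsub (Finset.mem_of_mem_erase hq)
    have := hmaxP Q hsubQ hvalidQ
    omega

/-- A bipartite graph with an even number of edges and `4Δ ≤ e` decomposes into
matchings of size exactly 2. -/
theorem stmt_9 {V : Type*} [Fintype V] [DecidableEq V] (G : SimpleGraph V)
    [DecidableRel G.Adj] (A : Set V)
    (hbip : ∀ x y, G.Adj x y → (x ∈ A ↔ y ∉ A))
    (heven : Even G.edgeFinset.card)
    (hdeg : ∀ v, 4 * G.degree v ≤ G.edgeFinset.card) :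
    ∃ P : Finset (Finset (Sym2 V)),
      (∀ M ∈ P, M.card = 2 ∧ ∀ e ∈ M, ∀ e' ∈ M, e ≠ e' → ∀ v ∈ e, v ∉ e') ∧
      (∀ M ∈ P, M ⊆ G.edgeFinset) ∧
      (∀ M ∈ P, ∀ M' ∈ P, M ≠ M' → Disjoint M M') ∧
      (∀ e ∈ G.edgeFinset, ∃ M ∈ P, e ∈ M) := by
  classical
  set R : Sym2 V → Sym2 V → Prop := fun e e' => ∀ v ∈ e, v ∉ e' with hR
  have hsym : ∀ e e', R e e' → R e' e := by
    intro e e' h v hv hv'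
    exact h v hv' hv
  have hirr : ∀ e, ¬ R e e := by
    intro e h
    induction e using Sym2.ind with
    | _ a b => exact h a (Sym2.mem_mk_left a b) (Sym2.mem_mk_left a b)
  have hdeg' : ∀ e ∈ G.edgeFinset,
      G.edgeFinset.card < 2 * (G.edgeFinset.filter (fun e' => R e e')).card := by
    intro e he
    induction e using Sym2.ind with
    | _ a b =>
      have hab : G.Adj a b := by rwa [SimpleGraph.mem_edgeFinset, SimpleGraph.mem_edgeSet] at he
      have hsplit := Finset.card_filter_add_card_filter_not
        (s := G.edgeFinset) (p := fun e' => R s(a, b) e')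
      have hsub : G.edgeFinset.filter (fun e' => ¬ R s(a, b) e') ⊆
          G.incidenceFinset a ∪ G.incidenceFinset b := by
        intro e' he'
        rw [Finset.mem_filter] at he'
        obtain ⟨he'1, he'2⟩ := he'
        simp only [hR] at he'2
        push_neg at he'2
        obtain ⟨v, hv, hv'⟩ := he'2
        rw [Sym2.mem_iff] at hv
        have he'set : e' ∈ G.edgeSet := SimpleGraph.mem_edgeFinset.1 he'1
        rcases hv with rfl | rfl
        · refine Finset.mem_union_left _ ?_
          rw [SimpleGraph.mem_incidenceFinset]
          exact ⟨he'set, hv'⟩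
        · refine Finset.mem_union_right _ ?_
          rw [SimpleGraph.mem_incidenceFinset]
          exact ⟨he'set, hv'⟩
      have hmema : s(a, b) ∈ G.incidenceFinset a := by
        rw [SimpleGraph.mem_incidenceFinset]
        exact ⟨SimpleGraph.mem_edgeFinset.1 he, Sym2.mem_mk_left a b⟩
      have hmemb : s(a, b) ∈ G.incidenceFinset b := by
        rw [SimpleGraph.mem_incidenceFinset]
        exact ⟨SimpleGraph.mem_edgeFinset.1 he, Sym2.mem_mk_right a b⟩
      have hinter : 1 ≤ (G.incidenceFinset a ∩ G.incidenceFinset b).card :=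
        Finset.card_pos.2 ⟨s(a, b), Finset.mem_inter.2 ⟨hmema, hmemb⟩⟩
      have hcui := Finset.card_union_add_card_inter (G.incidenceFinset a) (G.incidenceFinset b)
      have hbadle : (G.edgeFinset.filter (fun e' => ¬ R s(a, b) e')).card ≤
          (G.incidenceFinset a ∪ G.incidenceFinset b).card := Finset.card_le_card hsub
      have hca : (G.incidenceFinset a).card = G.degree a := G.card_incidenceFinset_eq_degree a
      have hcb : (G.incidenceFinset b).card = G.degree b := G.card_incidenceFinset_eq_degree b
      have h4a := hdeg a
      have h4b := hdeg b
      omega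
  obtain ⟨P, h1, h2, h3⟩ := pair_decomp R hsym hirr G.edgeFinset heven hdeg'
  refine ⟨P, ?_, ?_, h2, h3⟩
  · intro M hM
    obtain ⟨x, y, hx, hy, hRxy, rfl⟩ := h1 M hM
    constructor
    · exact Finset.card_pair (fun h => hirr x (h ▸ hRxy))
    · intro e he e' he' hne
      simp only [Finset.mem_insert, Finset.mem_singleton] at he he'
      rcases he with rfl | rfl <;> rcases he' with rfl | rfl
      · exact absurd rfl hne
      · exact hRxy
      · exact hsym _ _ hRxy
      · exact absurd rfl hne
  · intro M hM
    obtain ⟨x, y, hx, hy, hRxy, rfl⟩ := h1 M hM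
    exact Finset.insert_subset hx (by simpa using hy)
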